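/- arXiv:1902.03635 — 2 statements merged into one kernel-verified Lean document; each statement's English description precedes it below -/
import Mathlib

section
/- Let F₁ : ℝ^p → ℝ ∪ {∞} be proper closed, U ∈ ℝ^{p×q} a matrix with full row rank (so that the linear map x ↦ Ux is surjective), and define F(x) = F₁(Ux). If F₁ satisfies the KL property at Ux̄ with exponent α ∈ [0,1), then F satisfies the KL property at x̄ with exponent α. -/
set_option maxHeartbeats 1000000


open Filter Topology

variable {E : Type*} [NormedAddCommGroup E] [InnerProductSpace ℝ E] [FiniteDimensional ℝ E]

/-- `ζ` is a regular (Fréchet) subgradient of `f` at `x`. -/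
def HasRegSubgradAt (f : E → EReal) (x ζ : E) : Prop :=
  ∃ r : ℝ, f x = (r : EReal) ∧ ∀ ε : ℝ, 0 < ε →
    ∀ᶠ z in 𝓝[≠] x, ((r + inner ℝ ζ (z - x) - ε * ‖z - x‖ : ℝ) : EReal) ≤ f z

/-- The limiting (Mordukhovich) subdifferential of `f` at `x`. -/
def limSubdiff (f : E → EReal) (x : E) : Set E :=
  {ζ | ∃ (xk : ℕ → E) (ζk : ℕ → E),
    Tendsto xk atTop (𝓝 x) ∧ Tendsto (fun k => f (xk k)) atTop (𝓝 (f x)) ∧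
    Tendsto ζk atTop (𝓝 ζ) ∧ ∀ k, HasRegSubgradAt f (xk k) (ζk k)}

/-- `h` satisfies the KL property at `x0` with exponent `α`:
`dist(0, ∂h(x)) ≥ c (h(x) - h(x0))^α` near `x0` in the relevant range. -/
def KLExpAt (h : E → EReal) (x0 : E) (α : ℝ) : Prop :=
  ∃ c > (0 : ℝ), ∃ a > (0 : ℝ), ∃ ε > (0 : ℝ), ∀ x : E, ‖x - x0‖ < ε →
    h x0 < h x → h x < h x0 + (a : EReal) →
    ENNReal.ofReal (c * ((h x - h x0).toReal) ^ α) ≤ EMetric.infEdist 0 (limSubdiff h x)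


variable {F : Type*} [NormedAddCommGroup F] [InnerProductSpace ℝ F] [FiniteDimensional ℝ F]

lemma reg_comp (f : F → EReal) (T : E →L[ℝ] F) (g : F →L[ℝ] E)
    (hg : ∀ y, T (g y) = y) (x ζ : E)
    (h : HasRegSubgradAt (fun z => f (T z)) x ζ) :
    HasRegSubgradAt f (T x) ((ContinuousLinearMap.adjoint g) ζ) := by
  obtain ⟨r, hr, hev⟩ := h
  refine ⟨r, hr, fun ε hε => ?_⟩
  have hg1 : (0:ℝ) < ‖g‖ + 1 := by positivity
  set ε₀ := ε / (‖g‖ + 1) with hε₀def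
  have hε₀ : 0 < ε₀ := div_pos hε hg1
  have hmap : Tendsto (fun y => x + g (y - T x)) (𝓝[≠] (T x)) (𝓝[≠] x) := by
    rw [tendsto_nhdsWithin_iff]
    constructor
    · have hc : Continuous (fun y : F => x + g (y - T x)) := by continuity
      have := hc.tendsto (T x)
      simpa using this.mono_left nhdsWithin_le_nhds
    · filter_upwards [eventually_mem_nhdsWithin] with y hy
      simp only [Set.mem_compl_iff, Set.mem_singleton_iff] at hy ⊢
      intro hcontra
      apply hy
      have h0 : g (y - T x) = 0 := by
        have := congrArg (fun w => w - x) hcontra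
        simpa using this
      have : T (g (y - T x)) = T 0 := by rw [h0]
      rw [hg, map_zero] at this
      exact sub_eq_zero.mp this
  filter_upwards [hmap.eventually (hev ε₀ hε₀)] with y hy
  simp only [add_sub_cancel_left] at hy
  have hT : T (x + g (y - T x)) = y := by
    rw [map_add, hg]; abel
  rw [hT] at hy
  refine le_trans ?_ hy
  rw [EReal.coe_le_coe_iff]
  have hinner : (inner ℝ ((ContinuousLinearMap.adjoint g) ζ) (y - T x) : ℝ)
      = inner ℝ ζ (g (y - T x)) := ContinuousLinearMap.adjoint_inner_left g (y - T x) ζ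
  have hgle : ‖g (y - T x)‖ ≤ ‖g‖ * ‖y - T x‖ := g.le_opNorm _
  have : ε₀ * ‖g (y - T x)‖ ≤ ε * ‖y - T x‖ := by
    have h1 : ε₀ * ‖g (y - T x)‖ ≤ ε₀ * (‖g‖ * ‖y - T x‖) :=
      mul_le_mul_of_nonneg_left hgle (le_of_lt hε₀)
    have h2 : ε₀ * (‖g‖ * ‖y - T x‖) ≤ ε * ‖y - T x‖ := by
      rw [hε₀def]
      rw [div_mul_eq_mul_div, div_le_iff₀ hg1]
      have := norm_nonneg (y - T x)
      have := norm_nonneg g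
      nlinarith
    linarith
  linarith [hinner]

lemma lim_comp (f : F → EReal) (T : E →L[ℝ] F) (g : F →L[ℝ] E)
    (hg : ∀ y, T (g y) = y) (x ζ : E)
    (hζ : ζ ∈ limSubdiff (fun z => f (T z)) x) :
    (ContinuousLinearMap.adjoint g) ζ ∈ limSubdiff f (T x) := by
  obtain ⟨xk, ζk, hx, hfx, hζk, hreg⟩ := hζ
  exact ⟨fun k => T (xk k), fun k => (ContinuousLinearMap.adjoint g) (ζk k),
    (T.continuous.tendsto x).comp hx, hfx,
    ((ContinuousLinearMap.adjoint g).continuous.tendsto ζ).comp hζk,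
    fun k => reg_comp f T g hg (xk k) (ζk k) (hreg k)⟩


/-- KL exponent is preserved under composition with a surjective linear map
`x ↦ U x` given by a full-row-rank matrix `U`. -/
theorem stmt7 (p q : ℕ) (F₁ : EuclideanSpace ℝ (Fin p) → EReal)
    (hproper : (∃ z, F₁ z ≠ ⊤) ∧ ∀ z, F₁ z ≠ ⊥)
    (hlsc : LowerSemicontinuous F₁)
    (U : Matrix (Fin p) (Fin q) ℝ)
    (hU : Function.Surjective U.mulVec)
    (xb : EuclideanSpace ℝ (Fin q)) (α : ℝ) (hα : 0 ≤ α ∧ α < 1)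
    (hKL : KLExpAt F₁
      ((EuclideanSpace.equiv (Fin p) ℝ).symm (U.mulVec (EuclideanSpace.equiv (Fin q) ℝ xb))) α) :
    KLExpAt
      (fun x : EuclideanSpace ℝ (Fin q) =>
        F₁ ((EuclideanSpace.equiv (Fin p) ℝ).symm (U.mulVec (EuclideanSpace.equiv (Fin q) ℝ x))))
      xb α := by
  classical
  set T : EuclideanSpace ℝ (Fin q) →L[ℝ] EuclideanSpace ℝ (Fin p) :=
    ((EuclideanSpace.equiv (Fin p) ℝ).symm : (Fin p → ℝ) →L[ℝ] EuclideanSpace ℝ (Fin p)).comp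
      ((LinearMap.toContinuousLinearMap U.mulVecLin).comp
        ((EuclideanSpace.equiv (Fin q) ℝ) : EuclideanSpace ℝ (Fin q) →L[ℝ] (Fin q → ℝ))) with hT
  have hTapp : ∀ x : EuclideanSpace ℝ (Fin q),
      T x = (EuclideanSpace.equiv (Fin p) ℝ).symm (U.mulVec (EuclideanSpace.equiv (Fin q) ℝ x)) := by
    intro x
    simp [hT, Matrix.mulVecLin_apply]
  have hFeq : (fun x : EuclideanSpace ℝ (Fin q) =>
      F₁ ((EuclideanSpace.equiv (Fin p) ℝ).symm (U.mulVec (EuclideanSpace.equiv (Fin q) ℝ x))))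
      = fun z => F₁ (T z) := by
    funext z; rw [hTapp]
  rw [hFeq]
  rw [← hTapp xb] at hKL
  have hTsurj : Function.Surjective T := by
    intro y
    obtain ⟨x, hx⟩ := hU (EuclideanSpace.equiv (Fin p) ℝ y)
    refine ⟨(EuclideanSpace.equiv (Fin q) ℝ).symm x, ?_⟩
    rw [hTapp]
    simp [hx]
    change WithLp.toLp 2 (U.mulVec x) = y
    rw [hx]; rfl
  clear_value T
  obtain ⟨g₀, hg₀⟩ := T.toLinearMap.exists_rightInverse_of_surjective
    (LinearMap.range_eq_top.2 hTsurj)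
  set g : EuclideanSpace ℝ (Fin p) →L[ℝ] EuclideanSpace ℝ (Fin q) :=
    LinearMap.toContinuousLinearMap g₀ with hgdef
  have hg : ∀ y, T (g y) = y := by
    intro y
    have := LinearMap.ext_iff.1 hg₀ y
    simpa [hgdef] using this
  clear_value g
  set Ag := ContinuousLinearMap.adjoint g with hAg
  set D := ‖Ag‖ with hD
  have hD0 : (0:ℝ) ≤ D := norm_nonneg _
  obtain ⟨c, hc, a, ha, ε, hε, hmain⟩ := hKL
  refine ⟨c / (D + 1), by positivity, a, ha, ε / (‖T‖ + 1), by positivity, ?_⟩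
  intro x hx h1 h2
  have hnear : ‖T x - T xb‖ < ε := by
    have h3 : ‖T x - T xb‖ ≤ ‖T‖ * ‖x - xb‖ := by
      rw [← map_sub]; exact T.le_opNorm _
    have hT1 : (0:ℝ) < ‖T‖ + 1 := by positivity
    have hTn : (0:ℝ) ≤ ‖T‖ := norm_nonneg T
    calc ‖T x - T xb‖ ≤ ‖T‖ * ‖x - xb‖ := h3
      _ < ‖T‖ * (ε / (‖T‖ + 1)) + ε / (‖T‖ + 1) := by
          nlinarith [norm_nonneg (x - xb)]
      _ = (‖T‖ + 1) * (ε / (‖T‖ + 1)) := by ring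
      _ = ε := by field_simp
  have key := hmain (T x) hnear h1 h2
  show _ ≤ Metric.infEDist _ _
  rw [Metric.le_infEDist]
  intro ζ hζ
  have hv : Ag ζ ∈ limSubdiff F₁ (T x) := by
    rw [hAg]; exact lim_comp F₁ T g hg x ζ hζ
  clear_value Ag
  have key2 : ENNReal.ofReal (c * ((F₁ (T x) - F₁ (T xb)).toReal) ^ α)
      ≤ edist (0 : EuclideanSpace ℝ (Fin p)) (Ag ζ) :=
    key.trans (EMetric.infEdist_le_edist_of_mem hv)
  rw [edist_dist, dist_zero_left] at key2
  have hreal : c * ((F₁ (T x) - F₁ (T xb)).toReal) ^ α ≤ ‖Ag ζ‖ :=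
    (ENNReal.ofReal_le_ofReal_iff (norm_nonneg _)).mp key2
  have hζnorm : ‖Ag ζ‖ ≤ (D + 1) * ‖ζ‖ := by
    have h4 := Ag.le_opNorm ζ
    have h5 : D * ‖ζ‖ ≤ (D + 1) * ‖ζ‖ :=
      mul_le_mul_of_nonneg_right (by linarith) (norm_nonneg ζ)
    calc ‖Ag ζ‖ ≤ D * ‖ζ‖ := h4
      _ ≤ (D + 1) * ‖ζ‖ := h5
  have hfinal : c / (D + 1) * ((F₁ (T x) - F₁ (T xb)).toReal) ^ α ≤ ‖ζ‖ := by
    rw [div_mul_eq_mul_div, div_le_iff₀ (by positivity : (0:ℝ) < D + 1)]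
    nlinarith
  rw [edist_dist, dist_zero_left]
  exact ENNReal.ofReal_le_ofReal hfinal
end

section
/- Let h : X → ℝ ∪ {∞} be a proper closed function and Ω ⊆ dom ∂h a nonempty compact set on which h is constant, say h ≡ h̄ on Ω. Suppose h satisfies the KL property with exponent α ∈ [0,1) at each point of Ω. Then there exist ε > 0, a > 0 and c > 0 such that dist(0, ∂h(x)) ≥ c (h(x) − h̄)^α for every x with dist(x, Ω) < ε and h̄ < h(x) < h̄ + a. (Uniformized KL property with exponent.) -/
open Filter Topology

variable {E : Type*} [NormedAddCommGroup E] [InnerProductSpace ℝ E] [FiniteDimensional ℝ E]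

/-- uniformized KL property with exponent over a compact set on which `h`
is constant. -/
theorem stmt19 (h : E → EReal)
    (hproper : (∃ z, h z ≠ ⊤) ∧ ∀ z, h z ≠ ⊥)
    (hlsc : LowerSemicontinuous h)
    (Ω : Set E) (hΩne : Ω.Nonempty) (hΩcpt : IsCompact Ω)
    (hΩdom : ∀ x ∈ Ω, (limSubdiff h x).Nonempty)
    (hbar : ℝ) (hconst : ∀ x ∈ Ω, h x = (hbar : EReal))
    (α : ℝ) (hα : 0 ≤ α ∧ α < 1)
    (hKL : ∀ x ∈ Ω, KLExpAt h x α) :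
    ∃ ε > (0 : ℝ), ∃ a > (0 : ℝ), ∃ c > (0 : ℝ), ∀ x : E,
      Metric.infDist x Ω < ε → (hbar : EReal) < h x → h x < (hbar : EReal) + (a : EReal) →
      ENNReal.ofReal (c * ((h x - (hbar : EReal)).toReal) ^ α) ≤
        EMetric.infEdist 0 (limSubdiff h x) := by
  have key : ∀ y : E, ∃ c > (0:ℝ), ∃ a > (0:ℝ), ∃ ε > (0:ℝ), y ∈ Ω →
      ∀ x : E, ‖x - y‖ < ε → h y < h x → h x < h y + (a : EReal) →
      ENNReal.ofReal (c * ((h x - h y).toReal) ^ α) ≤ EMetric.infEdist 0 (limSubdiff h x) := by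
    intro y
    by_cases hy : y ∈ Ω
    · obtain ⟨c, hc, a, ha, ε, hε, H⟩ := hKL y hy
      exact ⟨c, hc, a, ha, ε, hε, fun _ => H⟩
    · exact ⟨1, one_pos, 1, one_pos, 1, one_pos, fun hy' => absurd hy' hy⟩
  choose c hc a ha ε hε H using key
  have cover : Ω ⊆ ⋃ y ∈ Ω, Metric.ball y (ε y / 2) := by
    intro y hy
    exact Set.mem_biUnion hy (Metric.mem_ball_self (by linarith [hε y]))
  obtain ⟨t, htΩ, htfin, htcov⟩ := hΩcpt.elim_finite_subcover_image
    (fun y _ => Metric.isOpen_ball) cover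
  have htne : t.Nonempty := by
    obtain ⟨ω0, hω0⟩ := hΩne
    rcases Set.mem_iUnion₂.1 (htcov hω0) with ⟨y, hyt, _⟩
    exact ⟨y, hyt⟩
  classical
  set T := htfin.toFinset with hT
  have hTne : T.Nonempty := by
    obtain ⟨y, hy⟩ := htne
    exact ⟨y, htfin.mem_toFinset.2 hy⟩
  refine ⟨T.inf' hTne (fun y => ε y / 2), ?_, T.inf' hTne a, ?_, T.inf' hTne c, ?_, ?_⟩
  · exact (Finset.lt_inf'_iff _).2 fun y _ => by linarith [hε y]
  · exact (Finset.lt_inf'_iff _).2 fun y _ => ha y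
  · exact (Finset.lt_inf'_iff _).2 fun y _ => hc y
  · intro x hx h1 h2
    obtain ⟨ω, hωΩ, hωd⟩ := (Metric.infDist_lt_iff hΩne).1 hx
    rcases Set.mem_iUnion₂.1 (htcov hωΩ) with ⟨y, hyt, hyball⟩
    have hyT : y ∈ T := htfin.mem_toFinset.2 hyt
    have hyΩ : y ∈ Ω := htΩ hyt
    have hεy : T.inf' hTne (fun y => ε y / 2) ≤ ε y / 2 := Finset.inf'_le _ hyT
    have hay : T.inf' hTne a ≤ a y := Finset.inf'_le _ hyT
    have hcy : T.inf' hTne c ≤ c y := Finset.inf'_le _ hyT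
    have hxy : ‖x - y‖ < ε y := by
      calc ‖x - y‖ ≤ ‖x - ω‖ + ‖ω - y‖ := norm_sub_le_norm_sub_add_norm_sub x ω y
        _ < T.inf' hTne (fun y => ε y / 2) + ε y / 2 := by
            have h1' : ‖x - ω‖ < T.inf' hTne (fun y => ε y / 2) := by
              rw [← dist_eq_norm]; exact hωd
            have h2' : ‖ω - y‖ < ε y / 2 := by
              rw [← dist_eq_norm]; exact Metric.mem_ball.1 hyball
            linarith
        _ ≤ ε y / 2 + ε y / 2 := by linarith
        _ = ε y := by ring
    have hhy : h y = (hbar : EReal) := hconst y hyΩ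
    have h1' : h y < h x := by rw [hhy]; exact h1
    have h2' : h x < h y + (a y : EReal) := by
      rw [hhy]
      refine lt_of_lt_of_le h2 (add_le_add_right ?_ _)
      exact_mod_cast hay
    have key := H y hyΩ x hxy h1' h2'
    rw [hhy] at key
    refine le_trans (ENNReal.ofReal_le_ofReal ?_) key
    have hpow : 0 ≤ ((h x - (hbar : EReal)).toReal) ^ α := by
      apply Real.rpow_nonneg
      have hlt := h1
      cases hx' : h x with
      | bot => rw [hx'] at hlt; exact absurd hlt (by simp)
      | top => simp [EReal.top_sub_coe]
      | coe r =>
          rw [hx'] at hlt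
          rw [← EReal.coe_sub, EReal.toReal_coe]
          linarith [EReal.coe_lt_coe_iff.1 hlt]
    exact mul_le_mul_of_nonneg_right hcy hpow
end
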